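/- An eventually periodic weight sequence satisfies the energy objective for some initial credit if and only if the sum of weights over one period is nonnegative. -/

import Mathlib

/-- An eventually periodic weight sequence satisfies the energy objective for some
initial credit iff the sum of the weights over one period is nonnegative. -/
theorem energy_iff_period_sum_nonneg (w : ℕ → ℤ) (p q : ℕ) (hq : 1 ≤ q)
    (hper : ∀ n, p ≤ n → w (n + q) = w n) :
    (∃ c₀ : ℕ, ∀ n, 0 ≤ (c₀ : ℤ) + ∑ k ∈ Finset.range n, w k) ↔
      0 ≤ ∑ k ∈ Finset.range q, w (p + k) := by
  set S : ℕ → ℤ := fun n => ∑ k ∈ Finset.range n, w k with hS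
  set P : ℤ := ∑ k ∈ Finset.range q, w (p + k) with hP
  have hwin : ∀ n, p ≤ n → ∑ k ∈ Finset.Ico n (n + q), w k = P := by
    intro n hn
    induction n, hn using Nat.le_induction with
    | base =>
      rw [hP, Finset.sum_Ico_eq_sum_range]
      simp [add_comm]
    | succ n hn ih =>
      have h1 : ∑ k ∈ Finset.Ico (n + 1) (n + 1 + q), w k
          = ∑ k ∈ Finset.Ico (n + 1) (n + q), w k + w (n + q) := by
        rw [show n + 1 + q = (n + q) + 1 by ring, Finset.sum_Ico_succ_top (by omega)]
      have h2 : ∑ k ∈ Finset.Ico n (n + q), w k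
          = w n + ∑ k ∈ Finset.Ico (n + 1) (n + q), w k := by
        rw [Finset.sum_eq_sum_Ico_succ_bot (by omega)]
      rw [h1, hper n hn, ← ih, h2]; ring
  have hstep : ∀ n, p ≤ n → S (n + q) = S n + P := by
    intro n hn
    have hsplit := Finset.sum_Ico_consecutive w (Nat.zero_le n) (Nat.le_add_right n q)
    simp only [hS, Finset.range_eq_Ico]
    rw [← hsplit, hwin n hn]
  constructor
  · rintro ⟨c₀, hc⟩
    by_contra hPneg
    push_neg at hPneg
    have hiter : ∀ m : ℕ, S (p + m * q) = S p + m * P := by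
      intro m; induction m with
      | zero => simp
      | succ m ih =>
        rw [show p + (m + 1) * q = (p + m * q) + q by ring, hstep _ (by omega), ih]
        push_cast; ring
    set m := (c₀ + S p).toNat + 1 with hm
    have hcb := hc (p + m * q)
    rw [show (∑ k ∈ Finset.range (p + m * q), w k) = S (p + m * q) from rfl, hiter m] at hcb
    have hP1 : P ≤ -1 := by omega
    have hmb : (c₀ : ℤ) + S p + 1 ≤ (m : ℤ) := by
      rw [hm]; push_cast; omega
    have h1 : (m : ℤ) * P ≤ (m : ℤ) * (-1) :=
      mul_le_mul_of_nonneg_left hP1 (by positivity)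
    linarith
  · intro hPge
    have hmin : ∀ n, ∃ m, m < p + q ∧ S m ≤ S n := by
      intro n
      induction n using Nat.strong_induction_on with
      | _ n ih =>
        by_cases h : n < p + q
        · exact ⟨n, h, le_refl _⟩
        · have hn : p ≤ n - q := by omega
          have heq : S n = S (n - q) + P := by
            have := hstep (n - q) hn
            rwa [show n - q + q = n by omega] at this
          obtain ⟨m, hm, hle⟩ := ih (n - q) (by omega)
          exact ⟨m, hm, by linarith⟩
    refine ⟨∑ m ∈ Finset.range (p + q), (S m).natAbs, fun n => ?_⟩
    obtain ⟨m, hm, hle⟩ := hmin n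
    have h1 : ((S m).natAbs : ℤ) ≤ ∑ j ∈ Finset.range (p + q), ((S j).natAbs : ℤ) := by
      apply Finset.single_le_sum (f := fun j => ((S j).natAbs : ℤ))
        (fun j _ => by positivity) (Finset.mem_range.mpr hm)
    have h2 : -(S m) ≤ |S m| := neg_le_abs _
    push_cast at h1 ⊢
    linarith
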